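/- arXiv:0712.1269 — 3 statements merged into one kernel-verified Lean document; each statement's English description precedes it below -/
import Mathlib

section
/- The orthogonal projection p restricted to the set of tight triangular vectors and the map θ restricted to L are mutually inverse: (i) for every a ∈ L, the vector θ(a) is tight triangular and p(θ(a)) = a; (ii) for every tight triangular b ∈ ℝ^E, p(b) ∈ L and θ(p(b)) = b. -/
open scoped BigOperators

abbrev Edge (n : ℕ) := {e : Sym2 (Fin n) // ¬ e.IsDiag}

namespace TSP
variable {n : ℕ}
noncomputable section

def dot (a x : Edge n → ℝ) : ℝ := ∑ e, a e * x e
def ev (a : Edge n → ℝ) (u v : Fin n) : ℝ :=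
  if h : u = v then 0 else a ⟨s(u, v), fun hd => h (Sym2.mk_isDiag_iff.mp hd)⟩
def indic (u v : Fin n) : Edge n → ℝ := fun e => if e.val = s(u, v) then 1 else 0
def delta (u : Fin n) : Edge n → ℝ := fun e => if u ∈ e.val then 1/2 else 0
def RootedTri (u v w : Fin n) : Prop := v ≠ w ∧ u ≠ v ∧ u ≠ w
def tri (a : Edge n → ℝ) (u v w : Fin n) : ℝ := ev a v u + ev a u w - ev a v w
def IsMetric (a : Edge n → ℝ) : Prop := ∀ u v w, RootedTri u v w → 0 ≤ tri a u v w
def IsTT (a : Edge n → ℝ) : Prop :=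
  IsMetric a ∧ ∀ u, ∃ v w, RootedTri u v w ∧ tri a u v w = 0
def lam (a : Edge n → ℝ) (u : Fin n) : ℝ :=
  sInf {r | ∃ v w, RootedTri u v w ∧ r = tri a u v w}
def theta (a : Edge n → ℝ) : Edge n → ℝ := fun e => a e - ∑ u, lam a u * delta u e
def zvec (n : ℕ) : Edge n → ℝ := fun _ => 2 / ((n : ℝ) - 1)
def gamma (a : Edge n → ℝ) : ℝ := -1 + dot a (zvec n) - ∑ u, lam a u
def nextF (i : Fin n) : Fin n := ⟨(i.val + 1) % n, Nat.mod_lt _ i.pos⟩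
def hamVec (σ : Equiv.Perm (Fin n)) : Edge n → ℝ :=
  fun e => if ∃ i : Fin n, e.val = s(σ i, σ (nextF i)) then 1 else 0
def stsp (n : ℕ) : Set (Edge n → ℝ) :=
  convexHull ℝ {x | ∃ σ : Equiv.Perm (Fin n), x = hamVec σ}
def degree (x : Edge n → ℝ) (u : Fin n) : ℝ := ∑ e, if u ∈ e.val then x e else 0
lemma ev_symm (a : Edge n → ℝ) (u v : Fin n) : ev a u v = ev a v u := by
  unfold ev
  rcases eq_or_ne u v with h | h
  · subst h; simp
  · rw [dif_neg h, dif_neg (Ne.symm h)]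
    congr 1
    exact Subtype.ext (Sym2.eq_swap)
def supportGraph (x : Edge n → ℝ) : SimpleGraph (Fin n) where
  Adj u v := u ≠ v ∧ 0 < ev x u v
  symm := ⟨fun u v h => ⟨h.1.symm, by rw [ev_symm]; exact h.2⟩⟩
  loopless := ⟨fun u h => h.1 rfl⟩
def IsEulerian (x : Edge n → ℝ) : Prop :=
  (∀ e, ∃ m : ℕ, x e = m) ∧ (supportGraph x).Connected ∧
    ∀ u, ∃ m : ℕ, 0 < m ∧ degree x u = 2 * m
def gtsp (n : ℕ) : Set (Edge n → ℝ) := convexHull ℝ {x | IsEulerian x}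
def IsFaceOf (Q F : Set (Edge n → ℝ)) : Prop :=
  ∃ a α, (∀ x ∈ Q, α ≤ dot a x) ∧ F = {x ∈ Q | dot a x = α}
def IsGood (F : Set (Edge n → ℝ)) : Prop := ∀ e : Edge n, ∃ x ∈ F, 0 < x e
def adim (X : Set (Edge n → ℝ)) : ℕ := Module.finrank ℝ (affineSpan ℝ X).direction
def direc (F : Set (Edge n → ℝ)) : Submodule ℝ (Edge n → ℝ) :=
  Submodule.span ℝ {d | ∃ x ∈ F, ∃ y ∈ F, d = y - x}
def shortcut (u v w : Fin n) : Edge n → ℝ :=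
  fun e => indic v w e - indic v u e - indic u w e
def gtspPolar (n : ℕ) : Set (Edge n → ℝ) := {b | ∀ x ∈ gtsp n, 1 ≤ dot b x}

/-- The face of `S` defined by `a ∈ D_S`. -/
def faceS (a : Edge n → ℝ) : Set (Edge n → ℝ) :=
  {x ∈ stsp n | dot a x = dot a (zvec n) - 1}

/-- `D_S`: the points `a ∈ L` whose inequality `a·x ≥ a·z − 1` is valid for `S`
and defines a nonempty good face of `S`. -/
def DS (n : ℕ) : Set (Edge n → ℝ) :=
  {a | (∀ u, dot (delta u) a = 0) ∧
       (∀ x ∈ stsp n, dot a (zvec n) - 1 ≤ dot a x) ∧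
       (faceS a).Nonempty ∧ IsGood (faceS a)}

/-- `D_P`: TT points of `P^△` defining nonempty good faces of `P`. -/
def DP (n : ℕ) : Set (Edge n → ℝ) :=
  {b | b ∈ gtspPolar n ∧ IsTT b ∧
       ({x ∈ gtsp n | dot b x = 1}).Nonempty ∧ IsGood {x ∈ gtsp n | dot b x = 1}}

/-- `𝔉(a)`: faces of `P` definable by rotated versions of `a·x ≥ a·z − 1`. -/
def Frot (a : Edge n → ℝ) : Set (Set (Edge n → ℝ)) :=
  {F | ∃ ξ : Fin n → ℝ,
    (∀ x ∈ gtsp n,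
      dot a (zvec n) - 1 + dot (∑ u, ξ u • delta u) (zvec n)
        ≤ dot (a + ∑ u, ξ u • delta u) x) ∧
    F = {x ∈ gtsp n |
      dot (a + ∑ u, ξ u • delta u) x
        = dot a (zvec n) - 1 + dot (∑ u, ξ u • delta u) (zvec n)}}

/-- `E^u(a)`: the edges achieving the minimal triangle slack rooted at `u`. -/
def Eu (a : Edge n → ℝ) (u : Fin n) : Set (Edge n) :=
  {e | ∃ v w, RootedTri u v w ∧ e.val = s(v, w) ∧ tri a u v w = lam a u}

def IsFacetP (n : ℕ) (G : Set (Edge n → ℝ)) : Prop :=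
  IsFaceOf (gtsp n) G ∧ adim G = n * (n - 1) / 2 - 1
def IsFacetS (n : ℕ) (F : Set (Edge n → ℝ)) : Prop :=
  IsFaceOf (stsp n) F ∧ adim F + 1 = adim (stsp n)
def IsNRFacet (n : ℕ) (G : Set (Edge n → ℝ)) : Prop :=
  IsFacetP n G ∧ IsFacetS n (G ∩ stsp n)
def IsDegreeFacet (n : ℕ) (G : Set (Edge n → ℝ)) : Prop :=
  ∃ u, G = {x ∈ gtsp n | dot (delta u) x = 1}
def IsNonNegFacet (n : ℕ) (G : Set (Edge n → ℝ)) : Prop :=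
  ∃ e : Edge n, G = {x ∈ gtsp n | x e = 0}
def IsNonNRFacet (n : ℕ) (G : Set (Edge n → ℝ)) : Prop :=
  IsFacetP n G ∧ IsGood G ∧ ¬ IsDegreeFacet n G ∧
    adim (G ∩ stsp n) + 1 < adim (stsp n)

/-- Solution set of the relaxation `R_B` (degree inequalities). -/
def RBge {k : ℕ} (n : ℕ) (b : Fin k → Edge n → ℝ) : Set (Edge n → ℝ) :=
  {x | (∀ j, 1 ≤ dot (b j) x) ∧ (∀ v, 1 ≤ dot (delta v) x) ∧ ∀ e, 0 ≤ x e}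

/-- Solution set of `R_B` with degree equations. -/
def RBeq {k : ℕ} (n : ℕ) (b : Fin k → Edge n → ℝ) : Set (Edge n → ℝ) :=
  {x | (∀ j, 1 ≤ dot (b j) x) ∧ (∀ v, dot (delta v) x = 1) ∧ ∀ e, 0 ≤ x e}

/-- The parsimonious property of the relaxation `R_B`. -/
def Parsimonious {k : ℕ} (n : ℕ) (b : Fin k → Edge n → ℝ) : Prop :=
  ∀ c : Edge n → ℝ, IsMetric c →
    sInf (dot c '' RBge n b) = sInf (dot c '' RBeq n b)

/-- Adjacency in the ridge graph of `P`. -/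
def RidgeAdj (n : ℕ) (F G : Set (Edge n → ℝ)) : Prop :=
  IsFacetP n F ∧ IsFacetP n G ∧ F ≠ G ∧ adim (F ∩ G) = n * (n - 1) / 2 - 2

/-- `q_I = Σ_{u ∉ I} δ_u`. -/
def qI (n : ℕ) (I : Finset (Fin n)) : Edge n → ℝ := ∑ u ∈ Iᶜ, delta u

/-- The face `G_I` of `P`. -/
def GI (n : ℕ) (a : Edge n → ℝ) (I : Finset (Fin n)) : Set (Edge n → ℝ) :=
  {x ∈ gtsp n | dot (theta a + qI n I) x = gamma a + dot (qI n I) (zvec n)}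

end

section Aux

lemma dot_comm' (a x : Edge n → ℝ) : dot a x = dot x a :=
  Finset.sum_congr rfl fun e _ => mul_comm _ _

lemma dot_sub_left' (a b x : Edge n → ℝ) :
    dot (fun e => a e - b e) x = dot a x - dot b x := by
  unfold dot
  rw [← Finset.sum_sub_distrib]
  exact Finset.sum_congr rfl fun e _ => sub_mul _ _ _

lemma dot_add_left' (a b x : Edge n → ℝ) :
    dot (fun e => a e + b e) x = dot a x + dot b x := by
  unfold dot
  rw [← Finset.sum_add_distrib]
  exact Finset.sum_congr rfl fun e _ => add_mul _ _ _

lemma dot_sum_left' (f : Fin n → Edge n → ℝ) (x : Edge n → ℝ) :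
    dot (fun e => ∑ u, f u e) x = ∑ u, dot (f u) x := by
  unfold dot
  rw [Finset.sum_comm]
  exact Finset.sum_congr rfl fun e _ => Finset.sum_mul _ _ _

lemma dot_smul_left' (r : ℝ) (a x : Edge n → ℝ) :
    dot (fun e => r * a e) x = r * dot a x := by
  unfold dot
  rw [Finset.mul_sum]
  exact Finset.sum_congr rfl fun e _ => mul_assoc _ _ _

lemma dot_span_zero (c : Fin n → ℝ) (y : Edge n → ℝ)
    (hy : ∀ u, dot (delta u) y = 0) :
    dot (fun e => ∑ x, c x * delta x e) y = 0 := by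
  rw [dot_sum_left']
  refine Finset.sum_eq_zero fun u _ => ?_
  rw [dot_smul_left', hy u, mul_zero]

lemma eq_zero_of_dot_self (d : Edge n → ℝ) (h : dot d d = 0) : ∀ e, d e = 0 := by
  intro e
  have h2 : ∀ f ∈ Finset.univ, (0:ℝ) ≤ d f * d f := fun f _ => mul_self_nonneg _
  exact mul_self_eq_zero.mp ((Finset.sum_eq_zero_iff_of_nonneg h2).mp h e (Finset.mem_univ e))

lemma ev_sub' (a b : Edge n → ℝ) (u v : Fin n) :
    ev (fun e => a e - b e) u v = ev a u v - ev b u v := by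
  unfold ev
  by_cases h : u = v
  · simp [h]
  · rw [dif_neg h, dif_neg h, dif_neg h]

lemma ev_sum' (f : Fin n → Edge n → ℝ) (u v : Fin n) :
    ev (fun e => ∑ x, f x e) u v = ∑ x, ev (f x) u v := by
  unfold ev
  by_cases h : u = v
  · simp [h]
  · rw [dif_neg h]
    exact Finset.sum_congr rfl fun x _ => by rw [dif_neg h]

lemma ev_smul' (r : ℝ) (a : Edge n → ℝ) (u v : Fin n) :
    ev (fun e => r * a e) u v = r * ev a u v := by
  unfold ev
  by_cases h : u = v
  · simp [h]
  · rw [dif_neg h, dif_neg h]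

lemma tri_sub' (a b : Edge n → ℝ) (u v w : Fin n) :
    tri (fun e => a e - b e) u v w = tri a u v w - tri b u v w := by
  unfold tri
  rw [ev_sub', ev_sub', ev_sub']
  ring

lemma tri_sum' (f : Fin n → Edge n → ℝ) (u v w : Fin n) :
    tri (fun e => ∑ x, f x e) u v w = ∑ x, tri (f x) u v w := by
  unfold tri
  rw [ev_sum', ev_sum', ev_sum', ← Finset.sum_add_distrib, ← Finset.sum_sub_distrib]

lemma ev_delta (x u v : Fin n) (h : u ≠ v) :
    ev (delta x) u v = if x = u ∨ x = v then 1/2 else 0 := by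
  unfold ev delta
  rw [dif_neg h]
  simp [Sym2.mem_iff]

lemma tri_delta {u v w : Fin n} (h : RootedTri u v w) (x : Fin n) :
    tri (delta x) u v w = if x = u then 1 else 0 := by
  obtain ⟨hvw, huv, huw⟩ := h
  unfold tri
  rw [ev_delta x v u (Ne.symm huv), ev_delta x u w huw, ev_delta x v w hvw]
  by_cases hxu : x = u
  · subst hxu
    simp [huv, huw, Ne.symm huv]
    norm_num
  · by_cases hxv : x = v
    · subst hxv
      simp [hxu, Ne.symm hvw, hvw]
    · by_cases hxw : x = w
      · subst hxw
        simp [hxu, hxv]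
      · simp [hxu, hxv, hxw]

lemma tri_shift {u v w : Fin n} (h : RootedTri u v w) (a : Edge n → ℝ) (c : Fin n → ℝ) :
    tri (fun e => a e - ∑ x, c x * delta x e) u v w = tri a u v w - c u := by
  rw [tri_sub', tri_sum']
  have hx : ∀ x, tri (fun e => c x * delta x e) u v w = if x = u then c x else 0 := by
    intro x
    have hs : tri (fun e => c x * delta x e) u v w = c x * tri (delta x) u v w := by
      unfold tri
      rw [ev_smul', ev_smul', ev_smul']
      ring
    rw [hs, tri_delta h x]
    by_cases hxu : x = u <;> simp [hxu]
  simp only [hx]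
  rw [Finset.sum_ite_eq' Finset.univ u c]
  simp

lemma lam_finite (a : Edge n → ℝ) (u : Fin n) :
    {r | ∃ v w, RootedTri u v w ∧ r = tri a u v w}.Finite :=
  Set.Finite.subset (Set.finite_range fun p : Fin n × Fin n => tri a u p.1 p.2)
    (by rintro r ⟨v, w, _, rfl⟩; exact ⟨(v, w), rfl⟩)

lemma lam_nonempty (hn : 5 ≤ n) (a : Edge n → ℝ) (u : Fin n) :
    {r | ∃ v w, RootedTri u v w ∧ r = tri a u v w}.Nonempty := by
  have h1 : (Finset.univ.erase u).Nonempty := by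
    rw [← Finset.card_pos, Finset.card_erase_of_mem (Finset.mem_univ u),
      Finset.card_univ, Fintype.card_fin]
    omega
  obtain ⟨v, hv⟩ := h1
  have h2 : ((Finset.univ.erase u).erase v).Nonempty := by
    rw [← Finset.card_pos, Finset.card_erase_of_mem hv,
      Finset.card_erase_of_mem (Finset.mem_univ u), Finset.card_univ, Fintype.card_fin]
    omega
  obtain ⟨w, hw⟩ := h2
  have hwv : w ≠ v := (Finset.mem_erase.mp hw).1
  have hwu : w ≠ u := (Finset.mem_erase.mp (Finset.mem_erase.mp hw).2).1
  have hvu : v ≠ u := (Finset.mem_erase.mp hv).1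
  exact ⟨tri a u v w, v, w, ⟨Ne.symm hwv, Ne.symm hvu, Ne.symm hwu⟩, rfl⟩

lemma lam_le (a : Edge n → ℝ) {u v w : Fin n} (h : RootedTri u v w) :
    lam a u ≤ tri a u v w :=
  csInf_le (Set.Finite.bddBelow (lam_finite a u)) ⟨v, w, h, rfl⟩

lemma lam_mem (hn : 5 ≤ n) (a : Edge n → ℝ) (u : Fin n) :
    ∃ v w, RootedTri u v w ∧ lam a u = tri a u v w :=
  (lam_nonempty hn a u).csInf_mem (lam_finite a u)

lemma lam_shift (hn : 5 ≤ n) (a : Edge n → ℝ) (c : Fin n → ℝ) (u : Fin n) :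
    lam (fun e => a e - ∑ x, c x * delta x e) u = lam a u - c u := by
  apply le_antisymm
  · obtain ⟨v, w, h, heq⟩ := lam_mem hn a u
    calc lam (fun e => a e - ∑ x, c x * delta x e) u
        ≤ tri (fun e => a e - ∑ x, c x * delta x e) u v w := lam_le _ h
      _ = tri a u v w - c u := tri_shift h a c
      _ = lam a u - c u := by rw [← heq]
  · obtain ⟨v, w, h, heq⟩ := lam_mem hn (fun e => a e - ∑ x, c x * delta x e) u
    calc lam a u - c u ≤ tri a u v w - c u := by linarith [lam_le a h]
      _ = tri (fun e => a e - ∑ x, c x * delta x e) u v w := (tri_shift h a c).symm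
      _ = lam (fun e => a e - ∑ x, c x * delta x e) u := heq.symm

lemma lam_TT (hn : 5 ≤ n) (b : Edge n → ℝ) (hb : IsTT b) (u : Fin n) : lam b u = 0 := by
  apply le_antisymm
  · obtain ⟨v, w, h, h0⟩ := hb.2 u
    rw [← h0]
    exact lam_le b h
  · obtain ⟨v, w, h, heq⟩ := lam_mem hn b u
    rw [heq]
    exact hb.1 u v w h

noncomputable def toE (a : Edge n → ℝ) : EuclideanSpace ℝ (Edge n) := (WithLp.equiv 2 (Edge n → ℝ)).symm a

lemma inner_eq_dot (a x : Edge n → ℝ) :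
    (inner (𝕜 := ℝ) (toE a) (toE x)) = dot a x := by
  simp [PiLp.inner_apply, RCLike.inner_apply, dot, toE, mul_comm]

lemma perp_span (r : Edge n → ℝ)
    (h : ∀ y : Edge n → ℝ, (∀ u, dot (delta u) y = 0) → dot r y = 0) :
    ∃ c : Fin n → ℝ, ∀ e, r e = ∑ u, c u * delta u e := by
  classical
  set δ' : Fin n → EuclideanSpace ℝ (Edge n) := fun u => toE (delta u) with hδ'
  set K : Submodule ℝ (EuclideanSpace ℝ (Edge n)) := Submodule.span ℝ (Set.range δ') with hK
  have hr : toE r ∈ Kᗮᗮ := by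
    rw [Submodule.mem_orthogonal]
    intro v hv
    have hy : ∀ u, dot (delta u) v = 0 := by
      intro u
      have h2 : inner (𝕜 := ℝ) (toE (delta u)) (toE v) = 0 :=
        (Submodule.mem_orthogonal K v).mp hv (δ' u) (Submodule.subset_span ⟨u, rfl⟩)
      rw [inner_eq_dot] at h2
      exact h2
    show inner (𝕜 := ℝ) (toE v) (toE r) = 0
    rw [inner_eq_dot, dot_comm']
    exact h v hy
  rw [Submodule.orthogonal_orthogonal] at hr
  rw [hK, Submodule.mem_span_range_iff_exists_fun] at hr
  obtain ⟨c, hc⟩ := hr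
  have hc2 : r = ∑ i, c i • delta i := by
    apply_fun (WithLp.linearEquiv 2 ℝ (Edge n → ℝ)) at hc
    rw [map_sum] at hc
    simp only [map_smul] at hc
    simpa [toE, hδ', WithLp.linearEquiv_apply] using hc.symm
  refine ⟨c, fun e => ?_⟩
  rw [hc2]
  simp [Finset.sum_apply]

end Aux

/-- the orthogonal projection `p` onto `L` and `θ` restricted to
the TT vectors are mutually inverse. -/
theorem stmt9 (n : ℕ) (hn : 5 ≤ n)
    (p : (Edge n → ℝ) → (Edge n → ℝ))
    (hp : ∀ a : Edge n → ℝ,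
      (∀ u, dot (delta u) (p a) = 0) ∧
      (∀ y : Edge n → ℝ, (∀ u, dot (delta u) y = 0) → dot (a - p a) y = 0)) :
    (∀ a : Edge n → ℝ, (∀ u, dot (delta u) a = 0) →
        IsTT (theta a) ∧ p (theta a) = a) ∧
    (∀ b : Edge n → ℝ, IsTT b →
        (∀ u, dot (delta u) (p b) = 0) ∧ theta (p b) = b) := by
  constructor
  · intro a hL
    have htheta : theta a = fun e => a e - ∑ x, lam a x * delta x e := rfl
    have htt : IsTT (theta a) := by
      constructor
      · intro u v w h
        rw [htheta, tri_shift h a (lam a)]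
        linarith [lam_le a h]
      · intro u
        obtain ⟨v, w, h, heq⟩ := lam_mem hn a u
        refine ⟨v, w, h, ?_⟩
        rw [htheta, tri_shift h a (lam a), ← heq]
        ring
    refine ⟨htt, ?_⟩
    obtain ⟨h1, h2⟩ := hp (theta a)
    set q := p (theta a) with hq
    have hdL : ∀ u, dot (delta u) (fun e => a e - q e) = 0 := by
      intro u
      have : dot (delta u) (fun e => a e - q e) = dot (fun e => a e - q e) (delta u) :=
        dot_comm' _ _
      rw [this, dot_sub_left', dot_comm' a, dot_comm' q, hL u, h1 u, sub_zero]
    have hdperp : ∀ y, (∀ u, dot (delta u) y = 0) → dot (fun e => a e - q e) y = 0 := by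
      intro y hy
      have e1 : dot (fun e => theta a e - q e) y = 0 := h2 y hy
      have e3 : (fun e => a e - q e)
          = fun e => (theta a e - q e) + (∑ x, lam a x * delta x e) := by
        funext e
        simp only [theta]
        ring
      rw [e3, dot_add_left', e1, dot_span_zero (lam a) y hy, add_zero]
    have hd0 : ∀ e, a e - q e = 0 :=
      eq_zero_of_dot_self _ (hdperp _ hdL)
    funext e
    have := hd0 e
    linarith
  · intro b hb
    refine ⟨(hp b).1, ?_⟩
    have hperp : ∀ y, (∀ u, dot (delta u) y = 0) → dot (fun e => b e - p b e) y = 0 :=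
      fun y hy => (hp b).2 y hy
    obtain ⟨c, hc⟩ := perp_span _ hperp
    have hfe : p b = fun e => b e - ∑ x, c x * delta x e := by
      funext e
      have := hc e
      linarith
    rw [hfe]
    funext e
    have hlam : ∀ u, lam (fun e => b e - ∑ x, c x * delta x e) u = -c u := by
      intro u
      rw [lam_shift hn b c u, lam_TT hn b hb u]
      ring
    simp only [theta, hlam, neg_mul, Finset.sum_neg_distrib]
    ring

end TSP
end

section
/- Let F be a nonempty good face of the graphical traveling salesman polyhedron P and let a ∈ ℝ^E be such that a·x ≥ 1 is valid for P and F = {x ∈ P : a·x = 1}. Then for every rooted triangle (u,vw), the shortcut s_{u,vw} is feasible for F (i.e., s_{u,vw} ∈ direc F) if and only if a·s_{u,vw} = 0. -/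
open scoped BigOperators

namespace TSP
variable {n : ℕ}
noncomputable section
section Helpers
variable {n : ℕ}

/-- `dot a` as a linear map. -/
def dotL (a : Edge n → ℝ) : (Edge n → ℝ) →ₗ[ℝ] ℝ where
  toFun x := dot a x
  map_add' x y := by simp [dot, mul_add, Finset.sum_add_distrib]
  map_smul' c x := by
    simp only [dot, Pi.smul_apply, smul_eq_mul, RingHom.id_apply, Finset.mul_sum]
    exact Finset.sum_congr rfl fun e _ => by ring

lemma dot_sub (a x y : Edge n → ℝ) : dot a (x - y) = dot a x - dot a y :=
  map_sub (dotL a) x y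

lemma degree_sub (x y : Edge n → ℝ) (p : Fin n) :
    degree (x - y) p = degree x p - degree y p := by
  unfold degree
  rw [← Finset.sum_sub_distrib]
  refine Finset.sum_congr rfl fun e _ => ?_
  by_cases h : p ∈ e.val <;> simp [h]

lemma degree_indic {α β : Fin n} (h : α ≠ β) (p : Fin n) :
    degree (indic α β : Edge n → ℝ) p = if p ∈ s(α, β) then (1 : ℝ) else 0 := by
  classical
  set e₁ : Edge n := ⟨s(α, β), fun hd => h (Sym2.mk_isDiag_iff.mp hd)⟩ with he₁
  have key : ∀ e : Edge n, (if p ∈ e.val then indic α β e else 0)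
      = if e = e₁ then (if p ∈ s(α, β) then (1 : ℝ) else 0) else 0 := by
    intro e
    by_cases he : e = e₁
    · subst he; simp [indic, he₁]
    · have hv : e.val ≠ s(α, β) := fun hv => he (Subtype.ext hv)
      simp [indic, hv, he]
  unfold degree
  rw [Finset.sum_congr rfl fun e _ => key e, Finset.sum_ite_eq' Finset.univ e₁]
  simp

end Helpers
section Helpers2
variable {n : ℕ}

lemma eulerian_nonneg {x : Edge n → ℝ} (hx : IsEulerian x) (e : Edge n) : 0 ≤ x e := by
  obtain ⟨m, hm⟩ := hx.1 e; rw [hm]; exact_mod_cast Nat.zero_le m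

lemma eulerian_one_le {x : Edge n → ℝ} (hx : IsEulerian x) {e : Edge n}
    (h : 0 < x e) : 1 ≤ x e := by
  obtain ⟨m, hm⟩ := hx.1 e
  rw [hm] at h ⊢
  exact_mod_cast Nat.one_le_iff_ne_zero.mpr (by exact_mod_cast h.ne' ∘ fun hh => by simp [hh])

/-- reachability transfer -/
lemma reachable_transfer {V : Type*} {G G' : SimpleGraph V}
    (h : ∀ p q, G.Adj p q → G'.Reachable p q) {p q : V}
    (hr : G.Reachable p q) : G'.Reachable p q := by
  obtain ⟨wlk⟩ := hr
  induction wlk with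
  | nil => exact SimpleGraph.Reachable.refl _
  | cons ha _ ih => exact (h _ _ ha).trans ih

end Helpers2
section Helpers3
variable {n : ℕ}

lemma sym2_ne {u v w : Fin n} (h : RootedTri u v w) :
    s(v, w) ≠ s(v, u) ∧ s(v, w) ≠ s(u, w) ∧ s(v, u) ≠ s(u, w) := by
  obtain ⟨hvw, huv, huw⟩ := h
  refine ⟨?_, ?_, ?_⟩ <;> intro hh <;> rw [Sym2.eq_iff] at hh <;>
    rcases hh with ⟨h1, h2⟩ | ⟨h1, h2⟩ <;> simp_all

lemma eulerian_shortcut {u v w : Fin n} (h : RootedTri u v w) {x : Edge n → ℝ}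
    (hx : IsEulerian x)
    (hpos : 1 ≤ x ⟨s(v, w), fun hd => h.1 (Sym2.mk_isDiag_iff.mp hd)⟩) :
    IsEulerian (x - shortcut u v w) := by
  classical
  obtain ⟨hvw, huv, huw⟩ := h
  obtain ⟨hne1, hne2, hne3⟩ := sym2_ne ⟨hvw, huv, huw⟩
  set evw : Edge n := ⟨s(v, w), fun hd => hvw (Sym2.mk_isDiag_iff.mp hd)⟩ with hevw
  set evu : Edge n := ⟨s(v, u), fun hd => huv (Sym2.mk_isDiag_iff.mp hd).symm⟩ with hevu
  set euw : Edge n := ⟨s(u, w), fun hd => huw (Sym2.mk_isDiag_iff.mp hd)⟩ with heuw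
  have hsc : ∀ e : Edge n, shortcut u v w e =
      (if e = evw then (1:ℝ) else 0) - (if e = evu then 1 else 0)
        - (if e = euw then 1 else 0) := by
    intro e
    have h1 : (e.val = s(v, w)) = (e = evw) := by
      simp [hevw, Subtype.ext_iff]
    have h2 : (e.val = s(v, u)) = (e = evu) := by
      simp [hevu, Subtype.ext_iff]
    have h3 : (e.val = s(u, w)) = (e = euw) := by
      simp [heuw, Subtype.ext_iff]
    simp only [shortcut, indic, h1, h2, h3]
  have hEE : evw ≠ evu := fun hh => hne1 (congrArg Subtype.val hh)
  have hEE2 : evw ≠ euw := fun hh => hne2 (congrArg Subtype.val hh)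
  have hEE3 : evu ≠ euw := fun hh => hne3 (congrArg Subtype.val hh)
  refine ⟨?_, ?_, ?_⟩
  · -- integrality
    intro e
    by_cases h1 : e = evw
    · subst h1
      obtain ⟨m, hm⟩ := hx.1 evw
      have hm1 : 1 ≤ m := by
        rw [hm] at hpos; exact_mod_cast hpos
      refine ⟨m - 1, ?_⟩
      simp [hsc, hEE, hEE2, hm, Nat.cast_sub hm1]
    · by_cases h2 : e = evu
      · subst h2
        obtain ⟨m, hm⟩ := hx.1 evu
        exact ⟨m + 1, by push_cast; simp [hsc, hEE.symm, hEE3, hm, h1]⟩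
      · by_cases h3 : e = euw
        · subst h3
          obtain ⟨m, hm⟩ := hx.1 euw
          exact ⟨m + 1, by push_cast; simp [hsc, hEE2.symm, hEE3.symm, hm, h1, h2]⟩
        · obtain ⟨m, hm⟩ := hx.1 e
          exact ⟨m, by simp [hsc, h1, h2, h3, hm]⟩
  · -- connectivity
    set y := x - shortcut u v w with hy
    have hyval : ∀ e : Edge n, y e = x e - shortcut u v w e := fun e => rfl
    have hyu : 0 < y evu := by
      rw [hyval, hsc, if_neg (Ne.symm hEE), if_pos rfl, if_neg hEE3]
      have := eulerian_nonneg hx evu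
      linarith
    have hyw : 0 < y euw := by
      rw [hyval, hsc, if_neg (Ne.symm hEE2), if_neg (Ne.symm hEE3), if_pos rfl]
      have := eulerian_nonneg hx euw
      linarith
    have hadjvu : (supportGraph y).Adj v u := by
      refine ⟨fun hh => huv hh.symm, ?_⟩
      rw [ev, dif_neg (fun hh => huv hh.symm)]
      exact hyu
    have hadjuw : (supportGraph y).Adj u w := by
      refine ⟨huw, ?_⟩
      rw [ev, dif_neg huw]
      exact hyw
    have hadj : ∀ p q, (supportGraph x).Adj p q → (supportGraph y).Reachable p q := by
      intro p q ⟨hpq, hposx⟩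
      rw [ev, dif_neg hpq] at hposx
      set epq : Edge n := ⟨s(p, q), fun hd => hpq (Sym2.mk_isDiag_iff.mp hd)⟩ with hepq
      by_cases hc : epq = evw
      · have : s(p, q) = s(v, w) := congrArg Subtype.val hc
        rcases Sym2.eq_iff.mp this with ⟨rfl, rfl⟩ | ⟨rfl, rfl⟩
        · exact hadjvu.reachable.trans hadjuw.reachable
        · exact (hadjuw.symm.reachable.trans hadjvu.symm.reachable)
      · refine SimpleGraph.Adj.reachable ⟨hpq, ?_⟩
        rw [ev, dif_neg hpq]
        have : shortcut u v w epq ≤ 0 := by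
          rw [hsc, if_neg hc]
          by_cases h2 : epq = evu
          · have h3 : epq ≠ euw := h2 ▸ hEE3
            rw [if_pos h2, if_neg h3]; norm_num
          · by_cases h3 : epq = euw <;> simp [h2, h3, Ne.symm hEE3]
        have := hyval epq
        show 0 < y epq
        linarith
    have hconn := hx.2.1
    rw [SimpleGraph.connected_iff] at hconn ⊢
    exact ⟨fun p q => reachable_transfer hadj (hconn.1 p q), hconn.2⟩
  · -- degrees
    intro p
    obtain ⟨m, hm0, hmd⟩ := hx.2.2 p
    have hdeg : degree (x - shortcut u v w) p = degree x p - degree (shortcut u v w) p :=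
      degree_sub x _ p
    have hsplit : degree (shortcut u v w) p =
        degree (indic v w : Edge n → ℝ) p - degree (indic v u : Edge n → ℝ) p
          - degree (indic u w : Edge n → ℝ) p := by
      have : shortcut u v w = (indic v w - indic v u - indic u w : Edge n → ℝ) := rfl
      rw [this, degree_sub, degree_sub]
    rw [degree_indic hvw, degree_indic (Ne.symm huv), degree_indic huw] at hsplit
    by_cases hp : p = u
    · subst hp
      have h1 : p ∉ s(v, w) := by
        rw [Sym2.mem_iff]; rintro (rfl | rfl); exacts [huv rfl, huw rfl]
      refine ⟨m + 1, by omega, ?_⟩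
      rw [hdeg, hsplit]
      rw [if_neg h1, if_pos (Sym2.mem_mk_right v p), if_pos (Sym2.mem_mk_left p w)]
      push_cast
      linarith
    · refine ⟨m, hm0, ?_⟩
      rw [hdeg, hsplit]
      have hz : ((if p ∈ s(v, w) then (1:ℝ) else 0) - (if p ∈ s(v, u) then 1 else 0)
          - (if p ∈ s(u, w) then 1 else 0)) = 0 := by
        rcases eq_or_ne p v with rfl | h1
        · simp [Sym2.mem_iff, Ne.symm huv, hvw]
        · rcases eq_or_ne p w with rfl | h2
          · simp [Sym2.mem_iff, Ne.symm hvw, Ne.symm huw]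
          · simp [Sym2.mem_iff, h1, h2, hp]
      rw [hz]
      linarith

end Helpers3
section Helpers4
variable {n : ℕ}

lemma exists_good_vertex (a : Edge n → ℝ) (hvalid : ∀ x ∈ gtsp n, 1 ≤ dot a x)
    {x : Edge n → ℝ} (hx : x ∈ gtsp n) (hdot : dot a x = 1) {e0 : Edge n}
    (hpos : 0 < x e0) : ∃ z, IsEulerian z ∧ dot a z = 1 ∧ 0 < z e0 := by
  classical
  rw [gtsp, convexHull_eq] at hx
  obtain ⟨ι, t, wgt, zf, hw0, hw1, hzs, hcm⟩ := hx
  rw [Finset.centerMass_eq_of_sum_1 _ _ hw1] at hcm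
  have hmem : ∀ i ∈ t, zf i ∈ gtsp n := fun i hi =>
    subset_convexHull ℝ _ (hzs i hi)
  have hge : ∀ i ∈ t, 1 ≤ dot a (zf i) := fun i hi => hvalid _ (hmem i hi)
  have hxe0 : x e0 = ∑ i ∈ t, wgt i * zf i e0 := by
    rw [← hcm]
    rw [Finset.sum_apply]
    rfl
  have hdx : dot a x = ∑ i ∈ t, wgt i * dot a (zf i) := by
    have h1 : dot a x = dotL a x := rfl
    rw [h1, ← hcm, map_sum]
    refine Finset.sum_congr rfl fun i _ => ?_
    rw [map_smul]
    rfl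
  have hslack : ∑ i ∈ t, wgt i * (dot a (zf i) - 1) = 0 := by
    have : ∑ i ∈ t, wgt i * (dot a (zf i) - 1)
        = (∑ i ∈ t, wgt i * dot a (zf i)) - ∑ i ∈ t, wgt i := by
      rw [← Finset.sum_sub_distrib]
      exact Finset.sum_congr rfl fun i _ => by ring
    rw [this, ← hdx, hdot, hw1]; ring
  have hterm : ∀ i ∈ t, wgt i * (dot a (zf i) - 1) = 0 := by
    rw [← Finset.sum_eq_zero_iff_of_nonneg
      (fun i hi => mul_nonneg (hw0 i hi) (by linarith [hge i hi]))]
    exact hslack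
  -- find a positive coordinate term
  have : ∃ i ∈ t, 0 < wgt i * zf i e0 := by
    by_contra hcon
    push_neg at hcon
    have : x e0 ≤ 0 := hxe0 ▸ Finset.sum_nonpos hcon
    linarith
  obtain ⟨i, hi, hip⟩ := this
  have hwpos : 0 < wgt i := by
    rcases (hw0 i hi).lt_or_eq with h | h
    · exact h
    · rw [← h] at hip; simp at hip
  have hzpos : 0 < zf i e0 := by
    rcases mul_pos_iff.mp hip with ⟨_, h⟩ | ⟨h, _⟩
    · exact h
    · linarith
  have hdz : dot a (zf i) = 1 := by
    have := hterm i hi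
    have h2 : dot a (zf i) - 1 = 0 := by
      rcases mul_eq_zero.mp this with h | h
      · exact absurd h hwpos.ne'
      · exact h
    linarith
  exact ⟨zf i, hzs i hi, hdz, hzpos⟩

end Helpers4
end

/-- for a nonempty good face `F` of `P` defined by `a·x ≥ 1`,
a shortcut is feasible for `F` iff it is orthogonal to `a`. -/
theorem stmt10 (n : ℕ) (hn : 5 ≤ n) (a : Edge n → ℝ)
    (hvalid : ∀ x ∈ gtsp n, 1 ≤ dot a x)
    (hne : ({x ∈ gtsp n | dot a x = 1}).Nonempty)
    (hgood : IsGood {x ∈ gtsp n | dot a x = 1}) :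
    ∀ u v w : Fin n, RootedTri u v w →
      (shortcut u v w ∈ direc {x ∈ gtsp n | dot a x = 1} ↔
        dot a (shortcut u v w) = 0) := by
  intro u v w h
  constructor
  · intro hs
    have hker : direc {x ∈ gtsp n | dot a x = 1} ≤ LinearMap.ker (dotL a) := by
      rw [direc, Submodule.span_le]
      rintro d ⟨x, ⟨hxg, hx1⟩, y, ⟨hyg, hy1⟩, rfl⟩
      rw [SetLike.mem_coe, LinearMap.mem_ker]
      show dot a (y - x) = 0
      rw [dot_sub, hx1, hy1]; ring
    exact LinearMap.mem_ker.mp (hker hs)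
  · intro h0
    obtain ⟨hvw, huv, huw⟩ := h
    obtain ⟨x, hxF, hxe⟩ :=
      hgood ⟨s(v, w), fun hd => hvw (Sym2.mk_isDiag_iff.mp hd)⟩
    obtain ⟨z, hz, hdz, hzpos⟩ := exists_good_vertex a hvalid hxF.1 hxF.2 hxe
    have h1 := eulerian_one_le hz hzpos
    have hy := eulerian_shortcut ⟨hvw, huv, huw⟩ hz h1
    have hyg : z - shortcut u v w ∈ gtsp n := subset_convexHull ℝ _ hy
    have hyd : dot a (z - shortcut u v w) = 1 := by rw [dot_sub, hdz, h0]; ring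
    have hrw : shortcut u v w = z - (z - shortcut u v w) :=
      (sub_sub_cancel z (shortcut u v w)).symm
    rw [direc, hrw]
    exact Submodule.subset_span
      ⟨z - shortcut u v w, ⟨hyg, hyd⟩, z, ⟨subset_convexHull ℝ _ hz, hdz⟩, rfl⟩

end TSP
end

section
/- Let a, b ∈ L and η ≥ 0. If γ(a) = η·γ(b) and θ(a) = η·θ(b), then η = 1 and a = b. In particular, the map a ↦ θ(a)/γ(a) is injective on any subset of L on which γ is positive. -/
open scoped BigOperators

namespace TSP
variable {n : ℕ}
noncomputable section
lemma card_incident' (n : ℕ) (u : Fin n) :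
    (Finset.univ.filter (fun e : Edge n => u ∈ e.val)).card = n - 1 := by
  have h : (Finset.univ.filter (fun v : Fin n => v ≠ u)).card
      = (Finset.univ.filter (fun e : Edge n => u ∈ e.val)).card := by
    apply Finset.card_bij (t := Finset.univ.filter (fun e : Edge n => u ∈ e.val))
      (fun (v : Fin n) (hv : v ∈ Finset.univ.filter (fun v : Fin n => v ≠ u)) =>
      (⟨s(u, v), fun hd => (Finset.mem_filter.mp hv).2 (Sym2.mk_isDiag_iff.mp hd).symm⟩ : Edge n))
    · intro v hv
      simp [Sym2.mem_iff]
    · intro v hv v' hv' h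
      have := congrArg Subtype.val h
      simp only [Sym2.eq, Sym2.rel_iff', Prod.mk.injEq, Prod.swap_prod_mk] at this
      rcases this with ⟨_, h2⟩ | ⟨h1, h2⟩
      · exact h2
      · exact ((Finset.mem_filter.mp hv').2 h1.symm).elim
    · intro e he
      have hu : u ∈ e.val := (Finset.mem_filter.mp he).2
      obtain ⟨w, hw⟩ := Sym2.mem_iff_exists.mp hu
      refine ⟨w, Finset.mem_filter.mpr ⟨Finset.mem_univ _, ?_⟩, ?_⟩
      · intro hwu; exact e.2 (by rw [hw, hwu]; exact Sym2.mk_isDiag_iff.mpr rfl)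
      · exact Subtype.ext hw.symm
  rw [← h]
  have h2 : (Finset.univ.filter (fun v : Fin n => v ≠ u)) = Finset.univ.erase u := by
    ext v; simp [Finset.mem_erase, and_comm]
  rw [h2, Finset.card_erase_of_mem (Finset.mem_univ _), Finset.card_univ, Fintype.card_fin]

lemma sum_delta' (hn : 1 ≤ n) (u : Fin n) :
    ∑ e : Edge n, delta u e = ((n : ℝ) - 1) / 2 := by
  unfold delta
  rw [Finset.sum_ite, Finset.sum_const, Finset.sum_const_zero, add_zero,
    card_incident', nsmul_eq_mul, Nat.cast_sub hn]
  push_cast; ring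

lemma dot_delta_delta' (u v : Fin n) (huv : u ≠ v) :
    ∑ e : Edge n, delta u e * delta v e = 1/4 := by
  have key : ∀ e : Edge n, delta u e * delta v e
      = if e = (⟨s(u,v), fun hd => huv (Sym2.mk_isDiag_iff.mp hd)⟩ : Edge n) then 1/4 else 0 := by
    intro e
    unfold delta
    by_cases h : e = (⟨s(u,v), fun hd => huv (Sym2.mk_isDiag_iff.mp hd)⟩ : Edge n)
    · subst h; simp [Sym2.mem_iff]; norm_num
    · rw [if_neg h]
      by_cases h1 : u ∈ e.val
      · by_cases h2 : v ∈ e.val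
        · exact absurd (Subtype.ext ((Sym2.mem_and_mem_iff huv).mp ⟨h1, h2⟩)) h
        · simp [h1, h2]
      · simp [h1]
  simp [key]

lemma sum_delta_sq' (u : Fin n) :
    ∑ e : Edge n, delta u e * delta u e = ((n:ℝ) - 1) / 4 := by
  unfold delta
  have h : ∀ e : Edge n, (if u ∈ e.val then (1:ℝ)/2 else 0) * (if u ∈ e.val then (1:ℝ)/2 else 0)
      = if u ∈ e.val then (1:ℝ)/4 else 0 := by intro e; split <;> norm_num
  rw [Finset.sum_congr rfl (fun e _ => h e), Finset.sum_ite, Finset.sum_const,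
    Finset.sum_const_zero, add_zero, card_incident', nsmul_eq_mul]
  rcases n with _ | m
  · exact absurd u.2 (by simp)
  · push_cast [Nat.succ_sub_one]; ring

lemma dot_theta_z' (hn : 5 ≤ n) (c : Edge n → ℝ) :
    dot (theta c) (zvec n) = gamma c + 1 := by
  have hn' : (5:ℝ) ≤ (n:ℝ) := by exact_mod_cast hn
  have hne : ((n:ℝ) - 1) ≠ 0 := by linarith
  have hz : ∀ u : Fin n, ∑ e : Edge n, delta u e * zvec n e = 1 := by
    intro u
    simp only [zvec, ← Finset.sum_mul]
    rw [sum_delta' (by omega) u]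
    field_simp
  unfold dot theta gamma dot
  simp only [sub_mul, Finset.sum_sub_distrib, Finset.sum_mul]
  rw [Finset.sum_comm]
  simp only [mul_assoc, ← Finset.mul_sum]
  simp only [hz, mul_one]
  ring

lemma key' (hn : 5 ≤ n) (a b : Edge n → ℝ) (η : ℝ)
    (ha : ∀ u, dot (delta u) a = 0) (hb : ∀ u, dot (delta u) b = 0)
    (h1 : gamma a = η * gamma b) (h2 : theta a = η • theta b) :
    η = 1 ∧ a = b := by
  have hn' : (5:ℝ) ≤ (n:ℝ) := by exact_mod_cast hn
  have hda : dot (theta a) (zvec n) = η * dot (theta b) (zvec n) := by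
    unfold dot
    rw [h2]
    simp [Finset.mul_sum, mul_assoc]
  rw [dot_theta_z' hn, dot_theta_z' hn] at hda
  have hη1 : η = 1 := by rw [h1] at hda; rw [mul_add, mul_one] at hda; linarith
  subst hη1
  rw [one_smul] at h2
  refine ⟨rfl, ?_⟩
  set μ : Fin n → ℝ := fun u => lam a u - lam b u with hμdef
  set S : ℝ := ∑ u, μ u with hSdef
  have hab : ∀ e, a e - b e = ∑ u, μ u * delta u e := by
    intro e
    have := congrFun h2 e
    unfold theta at this
    simp only [hμdef, sub_mul, Finset.sum_sub_distrib]
    linarith [this]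
  have hval : ∀ u v : Fin n, ∑ e : Edge n, delta u e * delta v e
      = 1/4 + (if u = v then ((n:ℝ)-2)/4 else 0) := by
    intro u v
    by_cases h : u = v
    · subst h; rw [sum_delta_sq', if_pos rfl]; ring
    · rw [dot_delta_delta' u v h, if_neg h, add_zero]
  have heq : ∀ v : Fin n, ((n:ℝ)-2) * μ v + S = 0 := by
    intro v
    have h0 : (0:ℝ) = ∑ e : Edge n, delta v e * (a e - b e) := by
      have := ha v
      have := hb v
      unfold dot at *
      simp only [mul_sub, Finset.sum_sub_distrib]
      linarith
    have h1' : ∑ e : Edge n, delta v e * (a e - b e)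
        = ∑ u, μ u * ∑ e : Edge n, delta u e * delta v e := by
      rw [Finset.sum_congr rfl (fun e _ => by rw [hab e])]
      simp only [Finset.mul_sum]
      rw [Finset.sum_comm]
      refine Finset.sum_congr rfl fun u _ => Finset.sum_congr rfl fun e _ => by ring
    have h2' : ∑ u, μ u * ∑ e : Edge n, delta u e * delta v e
        = S * (1/4) + μ v * (((n:ℝ)-2)/4) := by
      simp only [hval, mul_add, Finset.sum_add_distrib, mul_ite, mul_zero,
        Finset.sum_ite_eq', Finset.mem_univ, if_true, ← Finset.sum_mul, hSdef]
    have := h0.trans (h1'.trans h2')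
    linear_combination (-4 : ℝ) * this
  have hS : S = 0 := by
    have h0 : ∑ v : Fin n, (((n:ℝ)-2) * μ v + S) = 0 := by
      simp only [heq, Finset.sum_const_zero]
    have h1' : ∑ v : Fin n, (((n:ℝ)-2) * μ v + S)
        = ((n:ℝ)-2) * S + (n:ℝ) * S := by
      rw [Finset.sum_add_distrib, ← Finset.mul_sum, Finset.sum_const, Finset.card_univ,
        Fintype.card_fin, nsmul_eq_mul, hSdef]
    rw [h1'] at h0
    have hc : (2*(n:ℝ) - 2) * S = 0 := by linear_combination h0
    have hne : (2*(n:ℝ) - 2) ≠ 0 := by linarith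
    exact (mul_eq_zero.mp hc).resolve_left hne
  have hμ : ∀ v, μ v = 0 := by
    intro v
    have := heq v
    rw [hS, add_zero] at this
    have hne : ((n:ℝ) - 2) ≠ 0 := by linarith
    exact (mul_eq_zero.mp this).resolve_left hne
  funext e
  have := hab e
  simp only [hμ, zero_mul, Finset.sum_const_zero] at this
  linarith
end

/-- `(γ, θ)` is injective on `L` up to positive scaling; in
particular `a ↦ θ(a)/γ(a)` is injective where `γ > 0`. -/
theorem stmt14 (n : ℕ) (hn : 5 ≤ n) (a b : Edge n → ℝ) (η : ℝ)
    (ha : ∀ u, dot (delta u) a = 0) (hb : ∀ u, dot (delta u) b = 0)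
    (hη : 0 ≤ η)
    (h1 : gamma a = η * gamma b) (h2 : theta a = η • theta b) :
    (η = 1 ∧ a = b) ∧
    ∀ T : Set (Edge n → ℝ), (∀ c ∈ T, ∀ u, dot (delta u) c = 0) →
      (∀ c ∈ T, 0 < gamma c) →
      Set.InjOn (fun c => (gamma c)⁻¹ • theta c) T := by
  refine ⟨key' hn a b η ha hb h1 h2, ?_⟩
  intro T hT hTpos c hc d hd hcd
  have hgc := hTpos c hc
  have hgd := hTpos d hd
  simp only at hcd
  have hg : gamma c = (gamma c / gamma d) * gamma d := by
    field_simp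
  have hθ : theta c = (gamma c / gamma d) • theta d := by
    have h1' : theta c = gamma c • ((gamma c)⁻¹ • theta c) := by
      rw [smul_smul, mul_inv_cancel₀ hgc.ne', one_smul]
    rw [h1', hcd, smul_smul, div_eq_mul_inv]
  exact (key' hn c d (gamma c / gamma d) (hT c hc) (hT d hd) hg hθ).2

end TSP
end
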